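/- If Z is a chi-squared random variable with ℓ degrees of freedom, then for all t ≥ 0, P(|Z − ℓ| ≥ t) ≤ 2 exp(−min(t²/(8ℓ), t/8)). -/

import Mathlib

open MeasureTheory ProbabilityTheory Real
open scoped NNReal ENNReal

lemma aux_exp_ineq {u : ℝ} (h1 : -(1/2) ≤ u) (h2 : u ≤ 1/2) :
    1 ≤ Real.exp (u + u ^ 2) * (1 - u) := by
  rcases le_or_gt u 0 with hu | hu
  · have h := Real.add_one_le_exp (u + u ^ 2)
    nlinarith [sq_nonneg u, Real.exp_pos (u + u ^ 2)]
  · have h := Real.sum_le_exp_of_nonneg (x := u + u ^ 2) (by positivity) 3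
    simp [Finset.sum_range_succ, Nat.factorial] at h
    nlinarith [sq_nonneg u, sq_nonneg (u + u^2)]

lemma gaussian_exp_sq {c : ℝ} (hc : c < 1/2) :
    Integrable (fun x => Real.exp (c * x ^ 2)) (gaussianReal 0 1) ∧
    ∫ x, Real.exp (c * x ^ 2) ∂(gaussianReal 0 1) = (Real.sqrt (1 - 2 * c))⁻¹ := by
  have hb : 0 < 1/2 - c := by linarith
  have hmeasf : Measurable fun x : ℝ => (gaussianPDFReal 0 1 x).toNNReal :=
    (measurable_gaussianPDFReal 0 1).real_toNNReal
  have hd : gaussianReal 0 1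
      = volume.withDensity fun x => (((gaussianPDFReal 0 1 x).toNNReal : ℝ≥0) : ℝ≥0∞) := by
    rw [gaussianReal_of_var_ne_zero 0 one_ne_zero]; rfl
  have key : ∀ x : ℝ, ((gaussianPDFReal 0 1 x).toNNReal : ℝ≥0) • Real.exp (c * x ^ 2)
      = (Real.sqrt (2 * π))⁻¹ * Real.exp (-(1/2 - c) * x ^ 2) := by
    intro x
    rw [NNReal.smul_def, smul_eq_mul, Real.coe_toNNReal _ (gaussianPDFReal_nonneg 0 1 x)]
    unfold gaussianPDFReal
    push_cast
    rw [mul_one, mul_assoc, ← Real.exp_add]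
    ring_nf
  have hint : Integrable (fun x : ℝ => (Real.sqrt (2 * π))⁻¹ * Real.exp (-(1/2 - c) * x ^ 2)) :=
    (integrable_exp_neg_mul_sq hb).const_mul _
  constructor
  · rw [hd, integrable_withDensity_iff_integrable_smul hmeasf]
    simpa only [key] using hint
  · rw [hd, integral_withDensity_eq_integral_smul hmeasf]
    simp_rw [key]
    rw [integral_const_mul, integral_gaussian]
    rw [eq_comm, inv_eq_iff_eq_inv, eq_comm, mul_inv, inv_inv]
    rw [← Real.sqrt_inv, ← Real.sqrt_mul (by positivity)]
    congr 1
    field_simp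

lemma gaussian_centered_mgf {s : ℝ} (hs : |s| ≤ 1/4) :
    Integrable (fun x => Real.exp (s * (x ^ 2 - 1))) (gaussianReal 0 1) ∧
    ∫ x, Real.exp (s * (x ^ 2 - 1)) ∂(gaussianReal 0 1) ≤ Real.exp (2 * s ^ 2) := by
  obtain ⟨hs2, hs1⟩ := abs_le.1 hs
  have hc : s < 1/2 := by linarith
  obtain ⟨hint, hval⟩ := gaussian_exp_sq hc
  have heq : (fun x : ℝ => Real.exp (s * (x ^ 2 - 1)))
      = fun x => Real.exp (-s) * Real.exp (s * x ^ 2) := by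
    funext x; rw [← Real.exp_add]; ring_nf
  constructor
  · rw [heq]; exact hint.const_mul _
  · rw [heq, integral_const_mul, hval]
    have hpos : 0 < 1 - 2*s := by linarith
    have hu := aux_exp_ineq (u := 2*s) (by linarith) (by linarith)
    have h2 : Real.exp (-s - 2*s^2) ≤ Real.sqrt (1 - 2*s) := by
      rw [Real.le_sqrt (Real.exp_pos _).le]
      rw [← Real.exp_nat_mul]
      have hgoal : ((2:ℕ):ℝ) * (-s - 2*s^2) = -(2*s + (2*s)^2) := by push_cast; ring
      rw [hgoal, Real.exp_neg]
      rw [inv_le_iff_one_le_mul₀ (Real.exp_pos _)]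
      all_goals linarith [hu]
    calc Real.exp (-s) * (Real.sqrt (1-2*s))⁻¹
        ≤ Real.exp (-s) * (Real.exp (-s - 2*s^2))⁻¹ := by
          gcongr
          all_goals first | exact Real.exp_pos _ | exact h2
      _ = Real.exp (2*s^2) := by rw [← Real.exp_neg, ← Real.exp_add]; ring_nf

/-- Chi-squared concentration: if `Z = ∑ Xᵢ²` for i.i.d. standard Gaussians, then
`P(|Z − ℓ| ≥ t) ≤ 2 exp(−min(t²/(8ℓ), t/8))` for all `t ≥ 0`. -/
theorem chi_squared_concentration
    {Ω : Type*} [MeasurableSpace Ω] (μ : Measure Ω) [IsProbabilityMeasure μ]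
    (ℓ : ℕ) (hℓ : 0 < ℓ) (X : Fin ℓ → Ω → ℝ)
    (hmeas : ∀ i, Measurable (X i))
    (hindep : iIndepFun X μ)
    (hlaw : ∀ i, Measure.map (X i) μ = gaussianReal 0 1)
    (t : ℝ) (ht : 0 ≤ t) :
    μ {ω | t ≤ |(∑ i, (X i ω) ^ 2) - (ℓ : ℝ)|} ≤
      ENNReal.ofReal (2 * Real.exp (-(min (t ^ 2 / (8 * ℓ)) (t / 8)))) := by
  have hℓR : (0:ℝ) < ℓ := Nat.cast_pos.2 hℓ
  set Y : Fin ℓ → Ω → ℝ := fun i ω => X i ω ^ 2 - 1 with hY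
  have hg : Measurable fun x : ℝ => x ^ 2 - 1 := (measurable_id.pow_const 2).sub_const 1
  have hYmeas : ∀ i, Measurable (Y i) := fun i => hg.comp (hmeas i)
  have hYindep : iIndepFun Y μ :=
    hindep.comp (fun _ => fun x : ℝ => x ^ 2 - 1) (fun _ => hg)
  have hint : ∀ (s : ℝ), |s| ≤ 1/4 → ∀ i, Integrable (fun ω => Real.exp (s * Y i ω)) μ := by
    intro s hs i
    have h := (gaussian_centered_mgf hs).1
    have h2 : Integrable (fun x => Real.exp (s * (x ^ 2 - 1))) (Measure.map (X i) μ) := by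
      rw [hlaw i]; exact h
    have hsm : AEStronglyMeasurable (fun x : ℝ => Real.exp (s * (x ^ 2 - 1)))
        (Measure.map (X i) μ) := ((measurable_const.mul hg).exp).aestronglyMeasurable
    exact (integrable_map_measure hsm (hmeas i).aemeasurable).mp h2
  have hmgfY : ∀ (s : ℝ), |s| ≤ 1/4 → ∀ i, mgf (Y i) μ s ≤ Real.exp (2 * s ^ 2) := by
    intro s hs i
    have hsm : AEStronglyMeasurable (fun x : ℝ => Real.exp (s * (x ^ 2 - 1)))
        (Measure.map (X i) μ) := ((measurable_const.mul hg).exp).aestronglyMeasurable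
    have : mgf (Y i) μ s = ∫ x, Real.exp (s * (x ^ 2 - 1)) ∂(Measure.map (X i) μ) := by
      rw [mgf, integral_map (hmeas i).aemeasurable hsm]
    rw [this, hlaw i]
    exact (gaussian_centered_mgf hs).2
  set S : Ω → ℝ := ∑ i, Y i with hS
  have hSmgf : ∀ (s : ℝ), |s| ≤ 1/4 → mgf S μ s ≤ Real.exp (2 * ℓ * s ^ 2) := by
    intro s hs
    rw [hS, hYindep.mgf_sum hYmeas]
    calc ∏ i, mgf (Y i) μ s ≤ ∏ _i : Fin ℓ, Real.exp (2 * s ^ 2) :=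
        Finset.prod_le_prod (fun i _ => mgf_nonneg) (fun i _ => hmgfY s hs i)
      _ = Real.exp (2 * ℓ * s ^ 2) := by
        rw [Finset.prod_const, ← Real.exp_nat_mul, Finset.card_univ, Fintype.card_fin]
        ring_nf
  have hSint : ∀ (s : ℝ), |s| ≤ 1/4 → Integrable (fun ω => Real.exp (s * S ω)) μ := fun s hs =>
    hYindep.integrable_exp_mul_sum hYmeas (fun i _ => hint s hs i)
  set s : ℝ := min (t / (4 * ℓ)) (1/4) with hsdef
  have hs0 : 0 ≤ s := le_min (by positivity) (by norm_num)
  have hsabs : |s| ≤ 1/4 := by rw [abs_of_nonneg hs0]; exact min_le_right _ _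
  have hsabs' : |(-s)| ≤ 1/4 := by rwa [abs_neg]
  set m := min (t ^ 2 / (8 * ℓ)) (t / 8) with hm
  have hkey : -s * t + 2 * ℓ * s ^ 2 ≤ -m := by
    rcases le_or_gt (t / (4 * ℓ)) (1/4) with h | h
    · have hsv : s = t / (4 * ℓ) := min_eq_left h
      have htl : t ≤ ℓ := by
        rw [div_le_div_iff₀ (by positivity) (by norm_num)] at h
        linarith
      have hmv : m = t ^ 2 / (8 * ℓ) := min_eq_left (by
        rw [div_le_div_iff₀ (by positivity) (by norm_num)]
        nlinarith)
      rw [hsv, hmv]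
      have hne : (ℓ:ℝ) ≠ 0 := ne_of_gt hℓR
      apply le_of_eq
      field_simp
      ring
    · have hsv : s = 1/4 := min_eq_right h.le
      have htl : (ℓ:ℝ) ≤ t := by
        rw [div_lt_div_iff₀ (by linarith [hℓR]) (by linarith [hℓR])] at h
        linarith
      have hm' : m ≤ t / 8 := min_le_right _ _
      rw [hsv]
      nlinarith
  have hup : (μ {ω | t ≤ S ω}).toReal ≤ Real.exp (-m) := by
    calc (μ {ω | t ≤ S ω}).toReal ≤ Real.exp (-s * t) * mgf S μ s :=
        measure_ge_le_exp_mul_mgf t hs0 (hSint s hsabs)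
      _ ≤ Real.exp (-s * t) * Real.exp (2 * ℓ * s ^ 2) := by
          gcongr
          exact hSmgf s hsabs
      _ = Real.exp (-s * t + 2 * ℓ * s ^ 2) := (Real.exp_add _ _).symm
      _ ≤ Real.exp (-m) := Real.exp_le_exp.2 hkey
  have hlo : (μ {ω | S ω ≤ -t}).toReal ≤ Real.exp (-m) := by
    calc (μ {ω | S ω ≤ -t}).toReal ≤ Real.exp (-(-s) * (-t)) * mgf S μ (-s) :=
        measure_le_le_exp_mul_mgf (-t) (neg_nonpos.2 hs0) (hSint (-s) hsabs')
      _ ≤ Real.exp (-s * t) * Real.exp (2 * ℓ * s ^ 2) := by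
          have := hSmgf (-s) hsabs'
          rw [show -(-s) * (-t) = -s * t by ring]
          gcongr
          rwa [neg_pow, neg_one_pow_eq_one_iff_even (by norm_num : (-1:ℝ) ≠ 1) |>.mpr ⟨1, rfl⟩, one_mul] at this
      _ = Real.exp (-s * t + 2 * ℓ * s ^ 2) := (Real.exp_add _ _).symm
      _ ≤ Real.exp (-m) := Real.exp_le_exp.2 hkey
  have hSω : ∀ ω, S ω = (∑ i, X i ω ^ 2) - ℓ := by
    intro ω
    simp only [hS, hY, Finset.sum_apply, Finset.sum_sub_distrib, Finset.sum_const,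
      Finset.card_univ, Fintype.card_fin, nsmul_eq_mul, mul_one]
  have hsub : {ω | t ≤ |(∑ i, (X i ω) ^ 2) - (ℓ : ℝ)|} ⊆ {ω | t ≤ S ω} ∪ {ω | S ω ≤ -t} := by
    intro ω hω
    simp only [Set.mem_setOf_eq] at hω
    rcases le_abs.1 hω with h | h
    · left; simpa [Set.mem_setOf_eq, hSω ω] using h
    · right; simp only [Set.mem_setOf_eq, hSω ω]; linarith
  have hb : ∀ (A : Set Ω), (μ A).toReal ≤ Real.exp (-m) → μ A ≤ ENNReal.ofReal (Real.exp (-m)) := by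
    intro A hA
    rw [← ENNReal.ofReal_toReal (measure_ne_top μ A)]
    exact ENNReal.ofReal_le_ofReal hA
  calc μ {ω | t ≤ |(∑ i, (X i ω) ^ 2) - (ℓ : ℝ)|}
      ≤ μ ({ω | t ≤ S ω} ∪ {ω | S ω ≤ -t}) := measure_mono hsub
    _ ≤ μ {ω | t ≤ S ω} + μ {ω | S ω ≤ -t} := measure_union_le _ _
    _ ≤ ENNReal.ofReal (Real.exp (-m)) + ENNReal.ofReal (Real.exp (-m)) :=
        add_le_add (hb _ hup) (hb _ hlo)
    _ = ENNReal.ofReal (2 * Real.exp (-m)) := by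
        rw [← ENNReal.ofReal_add (Real.exp_pos _).le (Real.exp_pos _).le]
        ring_nf
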